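/- Let f : I → I be continuous on a compact interval with no periodic point of least period 2. Then for each c ∈ I the sequence of iterates f^n(c) converges to a fixed point of f. -/

import Mathlib

open Set Filter Topology

private lemma fix_exists_above (a b : ℝ) (f : ℝ → ℝ)
    (hf : ContinuousOn f (Set.Icc a b))
    (hmaps : Set.MapsTo f (Set.Icc a b) (Set.Icc a b))
    (x : ℝ) (hx : x ∈ Set.Icc a b) (hup : x < f x) :
    ∃ z ∈ Set.Icc x b, f z = z := by
  have hxb : x ≤ b := hx.2
  have hψ : ContinuousOn (fun t => f t - t) (Set.Icc x b) :=
    (hf.mono (Icc_subset_Icc hx.1 le_rfl)).sub continuousOn_id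
  have hb : b ∈ Set.Icc a b := ⟨le_trans hx.1 hxb, le_rfl⟩
  have h0 : (0:ℝ) ∈ Set.Icc (f b - b) (f x - x) :=
    ⟨sub_nonpos.mpr (hmaps hb).2, sub_nonneg.mpr hup.le⟩
  obtain ⟨z, hz, hz0⟩ := intermediate_value_Icc' hxb hψ h0
  exact ⟨z, hz, sub_eq_zero.mp hz0⟩

private lemma lemC (a b : ℝ) (hab : a ≤ b) (f : ℝ → ℝ)
    (hf : ContinuousOn f (Set.Icc a b))
    (hmaps : Set.MapsTo f (Set.Icc a b) (Set.Icc a b))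
    (hno2 : ¬∃ p ∈ Set.Icc a b, f (f p) = p ∧ f p ≠ p)
    (x : ℝ) (hx : x ∈ Set.Icc a b) (hup : x < f x) : x < f (f x) := by
  by_contra hcon
  push_neg at hcon
  have hfx : f x ∈ Set.Icc a b := hmaps hx
  have hffx : f (f x) ∈ Set.Icc a b := hmaps hfx
  have hne : f (f x) < x :=
    lt_of_le_of_ne hcon (fun he => hno2 ⟨x, hx, he, ne_of_gt hup⟩)
  have hax : a < x := lt_of_le_of_lt hffx.1 hne
  set S : Set ℝ := {t ∈ Set.Icc a x | t ≤ f (f t)} with hS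
  have haIcc : a ∈ Set.Icc a b := ⟨le_rfl, hab⟩
  have haS : a ∈ S := ⟨⟨le_rfl, hax.le⟩, (hmaps (hmaps haIcc)).1⟩
  have hSsub : S ⊆ Set.Icc a x := fun t ht => ht.1
  have hSbdd : BddAbove S := bddAbove_Icc.mono hSsub
  have hsubax : Set.Icc a x ⊆ Set.Icc a b := Icc_subset_Icc le_rfl hx.2
  have hG : ContinuousOn (fun t => f (f t) - t) (Set.Icc a x) := by
    have h1 : ContinuousOn (fun t => f (f t)) (Set.Icc a b) := hf.comp hf hmaps
    exact (h1.mono hsubax).sub continuousOn_id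
  have hSclosed : IsClosed S := by
    have hrw : S = Set.Icc a x ∩ (fun t => f (f t) - t) ⁻¹' Set.Ici 0 := by
      ext t
      simp only [hS, Set.mem_sep_iff, Set.mem_inter_iff, Set.mem_preimage, Set.mem_Ici,
        sub_nonneg]
    rw [hrw]
    exact hG.preimage_isClosed_of_isClosed isClosed_Icc isClosed_Ici
  set xs := sSup S with hxs
  have hxsS : xs ∈ S := hSclosed.csSup_mem ⟨a, haS⟩ hSbdd
  have hxsx : xs < x := lt_of_le_of_ne hxsS.1.2 (fun he => by
    have h2 := hxsS.2
    rw [he] at h2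
    exact absurd h2 (not_le.mpr hne))
  have hxsIcc : xs ∈ Set.Icc a b := ⟨hxsS.1.1, le_trans hxsS.1.2 hx.2⟩
  have hdec : ∀ t, xs < t → t ≤ x → f (f t) < t := by
    intro t h1 h2
    by_contra h3
    push_neg at h3
    exact absurd (le_csSup hSbdd ⟨⟨le_trans hxsS.1.1 h1.le, h2⟩, h3⟩) (not_le.mpr h1)
  have hioc : Set.Ioc xs x ∈ 𝓝[>] xs := by
    rw [← nhdsWithin_Ioc_eq_nhdsGT hxsx]
    exact self_mem_nhdsWithin
  have hle_filter : 𝓝[>] xs ≤ 𝓝[Set.Icc a x] xs := by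
    rw [← nhdsWithin_Ioc_eq_nhdsGT hxsx]
    exact nhdsWithin_mono _ (fun t ht => ⟨le_trans hxsS.1.1 ht.1.le, ht.2⟩)
  have htend_g : Filter.Tendsto (fun t => f (f t) - t) (𝓝[>] xs) (𝓝 (f (f xs) - xs)) := by
    have h1 : ContinuousWithinAt (fun t => f (f t) - t) (Set.Icc a x) xs :=
      hG.continuousWithinAt ⟨hxsS.1.1, hxsS.1.2⟩
    exact Filter.Tendsto.mono_left h1 hle_filter
  have hev2 : ∀ᶠ t in 𝓝[>] xs, t ∈ Set.Ioc xs x := hioc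
  have hfix2 : f (f xs) = xs := by
    refine le_antisymm ?_ hxsS.2
    by_contra h3
    push_neg at h3
    have hev : ∀ᶠ t in 𝓝[>] xs, 0 < f (f t) - t :=
      htend_g.eventually (lt_mem_nhds (by linarith))
    obtain ⟨t, h4, h5⟩ := (hev.and hev2).exists
    exact absurd (hdec t h5.1 h5.2) (by linarith)
  have hfxs : f xs = xs := by
    by_contra h4
    exact hno2 ⟨xs, hxsIcc, hfix2, h4⟩
  have hpsi : ∀ t, xs < t → t ≤ x → t < f t := by
    intro t h1 h2
    have htIcc : t ∈ Set.Icc a b := ⟨le_trans hxsIcc.1 h1.le, le_trans h2 hx.2⟩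
    rcases lt_trichotomy t (f t) with h | h | h
    · exact h
    · exfalso
      have h5 := hdec t h1 h2
      rw [← h, ← h] at h5
      exact lt_irrefl t h5
    · exfalso
      have hψ : ContinuousOn (fun u => f u - u) (Set.Icc t x) :=
        (hf.mono (Icc_subset_Icc htIcc.1 hx.2)).sub continuousOn_id
      have h0 : (0:ℝ) ∈ Set.Icc (f t - t) (f x - x) := ⟨by linarith, by linarith⟩
      obtain ⟨q, hq, hq0⟩ := intermediate_value_Icc h2 hψ h0
      have hfq : f q = q := sub_eq_zero.mp hq0
      have h6 : f (f q) < q := hdec q (lt_of_lt_of_le h1 hq.1) hq.2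
      rw [hfq, hfq] at h6
      exact lt_irrefl q h6
  obtain ⟨z0', hz0'mem, hz0'⟩ := fix_exists_above a b f hf hmaps x hx hup
  set F : Set ℝ := {t ∈ Set.Icc x b | f t = t} with hF
  have hFne : F.Nonempty := ⟨z0', hz0'mem, hz0'⟩
  have hFclosed : IsClosed F := by
    have hrw : F = Set.Icc x b ∩ (fun t => f t - t) ⁻¹' {0} := by
      ext t
      simp only [hF, Set.mem_sep_iff, Set.mem_inter_iff, Set.mem_preimage,
        Set.mem_singleton_iff, sub_eq_zero]
    rw [hrw]
    exact ((hf.mono (Icc_subset_Icc hx.1 le_rfl)).sub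
      continuousOn_id).preimage_isClosed_of_isClosed isClosed_Icc isClosed_singleton
  have hFbdd : BddBelow F := bddBelow_Icc.mono (fun t ht => ht.1)
  set z0 := sInf F with hz0def
  have hz0F : z0 ∈ F := hFclosed.csInf_mem hFne hFbdd
  have hxz0 : x < z0 := lt_of_le_of_ne hz0F.1.1 (fun he => by
    have h2 := hz0F.2
    rw [← he] at h2
    exact (ne_of_gt hup) h2)
  have hpsi2 : ∀ t, x ≤ t → t < z0 → t < f t := by
    intro t h1 h2
    have htb : t ≤ b := le_trans h2.le hz0F.1.2
    rcases lt_trichotomy t (f t) with h | h | h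
    · exact h
    · exact absurd (csInf_le hFbdd ⟨⟨h1, htb⟩, h.symm⟩) (not_le.mpr h2)
    · exfalso
      have hψ : ContinuousOn (fun u => f u - u) (Set.Icc x t) :=
        (hf.mono (Icc_subset_Icc hx.1 htb)).sub continuousOn_id
      have h0 : (0:ℝ) ∈ Set.Icc (f t - t) (f x - x) := ⟨by linarith, by linarith⟩
      obtain ⟨q, hq, hq0⟩ := intermediate_value_Icc' h1 hψ h0
      have hfq : f q = q := sub_eq_zero.mp hq0
      have h3 : z0 ≤ q := csInf_le hFbdd ⟨⟨hq.1, le_trans hq.2 htb⟩, hfq⟩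
      linarith [hq.2]
  have hjump : ∀ t, xs < t → t ≤ x → z0 ≤ f t := by
    intro t h1 h2
    by_contra h3
    push_neg at h3
    have h4 : t < f t := hpsi t h1 h2
    have h5 : f t < f (f t) := by
      rcases le_or_gt (f t) x with h6 | h6
      · exact hpsi (f t) (lt_trans h1 h4) h6
      · exact hpsi2 (f t) h6.le h3
    have h7 := hdec t h1 h2
    linarith
  have hfinal : z0 ≤ f xs := by
    have htendf : Filter.Tendsto f (𝓝[>] xs) (𝓝 (f xs)) := by
      have h1 : ContinuousWithinAt f (Set.Icc a b) xs := hf.continuousWithinAt hxsIcc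
      refine Filter.Tendsto.mono_left h1 ?_
      rw [← nhdsWithin_Ioc_eq_nhdsGT hxsx]
      exact nhdsWithin_mono _ (fun t ht => ⟨le_trans hxsIcc.1 ht.1.le, le_trans ht.2 hx.2⟩)
    refine ge_of_tendsto htendf ?_
    exact hev2.mono (fun t ht => hjump t ht.1 ht.2)
  rw [hfxs] at hfinal
  linarith


private lemma reflect_iter (f : ℝ → ℝ) : ∀ (n : ℕ) (t : ℝ),
    (fun u => -f (-u))^[n] (-t) = - f^[n] t := by
  intro n
  induction n with
  | zero => intro t; simp
  | succ k ih =>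
    intro t
    rw [Function.iterate_succ_apply, Function.iterate_succ_apply]
    simp only [neg_neg]
    exact ih (f t)

private lemma reflect_hyps (a b : ℝ) (f : ℝ → ℝ)
    (hf : ContinuousOn f (Set.Icc a b))
    (hmaps : Set.MapsTo f (Set.Icc a b) (Set.Icc a b))
    (hno2 : ¬∃ p ∈ Set.Icc a b, f (f p) = p ∧ f p ≠ p) :
    ContinuousOn (fun u => -f (-u)) (Set.Icc (-b) (-a)) ∧
    Set.MapsTo (fun u => -f (-u)) (Set.Icc (-b) (-a)) (Set.Icc (-b) (-a)) ∧
    ¬∃ p ∈ Set.Icc (-b) (-a),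
      (fun u => -f (-u)) ((fun u => -f (-u)) p) = p ∧ (fun u => -f (-u)) p ≠ p := by
  have hnegmaps : Set.MapsTo (fun u : ℝ => -u) (Set.Icc (-b) (-a)) (Set.Icc a b) := by
    intro t ht
    simp only [Set.mem_Icc] at ht ⊢
    constructor <;> linarith [ht.1, ht.2]
  refine ⟨?_, ?_, ?_⟩
  · have h1 : ContinuousOn (fun u : ℝ => f (-u)) (Set.Icc (-b) (-a)) :=
      hf.comp (continuous_neg.continuousOn) hnegmaps
    exact h1.neg
  · intro t ht
    have h1 : f (-t) ∈ Set.Icc a b := hmaps (hnegmaps ht)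
    simp only [Set.mem_Icc] at h1 ⊢
    constructor <;> linarith [h1.1, h1.2]
  · rintro ⟨p, hp, h2, h1⟩
    simp only [neg_neg] at h2 h1
    apply hno2
    refine ⟨-p, hnegmaps hp, ?_, ?_⟩
    · have : f (f (-p)) = -p := by linarith [neg_eq_iff_eq_neg.mp h2]
      exact this
    · intro he
      apply h1
      rw [he, neg_neg]


private lemma keyB (a b : ℝ) (hab : a ≤ b) (f : ℝ → ℝ)
    (hf : ContinuousOn f (Set.Icc a b))
    (hmaps : Set.MapsTo f (Set.Icc a b) (Set.Icc a b))
    (hno2 : ¬∃ p ∈ Set.Icc a b, f (f p) = p ∧ f p ≠ p) :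
    ∀ k, ∀ x ∈ Set.Icc a b, x < f x → x < f^[k+1] x := by
  intro k
  induction k using Nat.strong_induction_on with
  | _ k IH =>
  intro x hx hup
  rcases Nat.eq_zero_or_pos k with hk0 | hk1
  · subst hk0; simpa using hup
  set xi : ℕ → ℝ := fun i => f^[i] x with hxi
  have hximem : ∀ i, xi i ∈ Set.Icc a b := fun i => (hmaps.iterate i) hx
  have hxisucc : ∀ i, xi (i+1) = f (xi i) := fun i => Function.iterate_succ_apply' f i x
  have hxi0 : xi 0 = x := rfl
  have hfx1 : f x = xi 1 := by rw [hxisucc 0, hxi0]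
  have horb : ∀ i, 1 ≤ i → i ≤ k → x < xi i := by
    intro i h1 h2
    have h3 := IH (i-1) (by omega) x hx hup
    have h4 : i - 1 + 1 = i := by omega
    rw [h4] at h3
    exact h3
  by_cases hcase : ∃ i, 1 ≤ i ∧ i ≤ k ∧ xi i ≤ xi (i+1)
  · obtain ⟨i, hi1, hik, hile⟩ := hcase
    rcases eq_or_lt_of_le hile with heq | hlt
    · have hfixi : f (xi i) = xi i := by rw [← hxisucc i, ← heq]
      have h5 : f^[k+1] x = xi i := by
        have h6 : k+1 = (k+1-i) + i := by omega
        show f^[k+1] x = xi i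
        rw [h6, Function.iterate_add_apply]
        exact Function.iterate_fixed hfixi (k+1-i)
      rw [h5]
      exact horb i hi1 hik
    · have h6 : xi i < f (xi i) := by rw [← hxisucc i]; exact hlt
      have h7 := IH (k - i) (by omega) (xi i) (hximem i) h6
      have h8 : f^[k-i+1] (xi i) = f^[k+1] x := by
        show f^[k-i+1] (f^[i] x) = f^[k+1] x
        rw [← Function.iterate_add_apply]
        congr 1
        omega
      rw [h8] at h7
      exact lt_trans (horb i hi1 hik) h7
  · push_neg at hcase
    by_contra hcon
    push_neg at hcon
    have hcon' : xi (k+1) ≤ x := hcon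
    rcases eq_or_lt_of_le (show 1 ≤ k from hk1) with hk1' | hk2
    · -- k = 1
      have h2 := lemC a b hab f hf hmaps hno2 x hx hup
      have h3 : xi 2 = f (f x) := by rw [hxisucc 1, hxisucc 0, hxi0]
      have h4 : xi (k+1) = xi 2 := by rw [← hk1']
      rw [h4, h3] at hcon'
      linarith
    · -- 2 ≤ k
      have hx2 : x < xi 2 := horb 2 (by omega) (by omega)
      have hx32 : xi 3 < xi 2 := hcase 2 (by omega) hk2
      have hpsix2 : f (xi 2) < xi 2 := by rw [← hxisucc 2]; exact hx32
      have hx2b : xi 2 ≤ b := (hximem 2).2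
      have hIccsub : Set.Icc x (xi 2) ⊆ Set.Icc a b := Icc_subset_Icc hx.1 hx2b
      have hψc : ContinuousOn (fun u => f u - u) (Set.Icc x (xi 2)) :=
        (hf.mono hIccsub).sub continuousOn_id
      have h0 : (0:ℝ) ∈ Set.Icc (f (xi 2) - xi 2) (f x - x) := ⟨by linarith, by linarith⟩
      obtain ⟨q0, hq0mem, hq0fix'⟩ := intermediate_value_Icc' hx2.le hψc h0
      set Ff : Set ℝ := {t ∈ Set.Icc x (xi 2) | f t = t} with hFf
      have hFfne : Ff.Nonempty := ⟨q0, hq0mem, sub_eq_zero.mp hq0fix'⟩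
      have hFfclosed : IsClosed Ff := by
        have hrw : Ff = Set.Icc x (xi 2) ∩ (fun t => f t - t) ⁻¹' {0} := by
          ext t
          simp only [hFf, Set.mem_sep_iff, Set.mem_inter_iff, Set.mem_preimage,
            Set.mem_singleton_iff, sub_eq_zero]
        rw [hrw]
        exact ((hf.mono hIccsub).sub continuousOn_id).preimage_isClosed_of_isClosed
          isClosed_Icc isClosed_singleton
      have hFfbdd : BddBelow Ff := bddBelow_Icc.mono (fun t ht => ht.1)
      set p0 := sInf Ff with hp0def
      have hp0 : p0 ∈ Ff := hFfclosed.csInf_mem hFfne hFfbdd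
      have hp0fix : f p0 = p0 := hp0.2
      have hxp0 : x < p0 := lt_of_le_of_ne hp0.1.1 (fun he => by
        have h2 := hp0fix
        rw [← he] at h2
        exact (ne_of_gt hup) h2)
      have hp0x2 : p0 < xi 2 := lt_of_le_of_ne hp0.1.2 (fun he => by
        have h2 := hp0fix
        rw [he] at h2
        exact (ne_of_lt hpsix2) h2)
      have hpsi0 : ∀ t, x ≤ t → t < p0 → t < f t := by
        intro t h1 h2
        have htmem : t ∈ Set.Icc x (xi 2) := ⟨h1, le_trans h2.le hp0.1.2⟩
        rcases lt_trichotomy t (f t) with h | h | h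
        · exact h
        · exact absurd (csInf_le hFfbdd ⟨htmem, h.symm⟩) (not_le.mpr h2)
        · exfalso
          have hψc2 : ContinuousOn (fun u => f u - u) (Set.Icc x t) :=
            (hf.mono (Icc_subset_Icc hx.1 (le_trans htmem.2 hx2b))).sub continuousOn_id
          have h0' : (0:ℝ) ∈ Set.Icc (f t - t) (f x - x) := ⟨by linarith, by linarith⟩
          obtain ⟨q, hq, hqfix⟩ := intermediate_value_Icc' h1 hψc2 h0'
          have h3 : p0 ≤ q := csInf_le hFfbdd ⟨⟨hq.1, le_trans hq.2 htmem.2⟩,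
            sub_eq_zero.mp hqfix⟩
          linarith [hq.2]
      have horbp : ∀ i, 1 ≤ i → i ≤ k → p0 ≤ xi i := by
        intro i h1 h2
        by_contra h3
        push_neg at h3
        have h4 := hpsi0 (xi i) (horb i h1 h2).le h3
        rw [← hxisucc i] at h4
        exact absurd (hcase i h1 h2) (not_lt.mpr h4.le)
      have htstar : p0 < xi k := by
        rcases eq_or_lt_of_le (horbp k (by omega) le_rfl) with he | h
        · exfalso
          have h9 : xi (k+1) = p0 := by rw [hxisucc k, ← he, hp0fix]
          rw [h9] at hcon'
          linarith
        · exact h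
      have hts2 : ∀ i, 2 ≤ i → i ≤ k → xi i ≤ xi 2 := by
        intro i h1
        induction i, h1 using Nat.le_induction with
        | base => intro _; exact le_rfl
        | succ i hi IH2 =>
          intro h2
          exact le_trans (hcase i (by omega) (by omega)).le (IH2 (by omega))
      have htsk : xi k ≤ xi 2 := hts2 k hk2 le_rfl
      have hx21 : xi 2 < xi 1 := hcase 1 le_rfl (by omega)
      have htx1 : xi k < xi 1 := lt_of_le_of_lt htsk hx21
      -- IVT: w ∈ [x, p0] with f w = xi k
      have hψ3 : ContinuousOn f (Set.Icc x p0) :=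
        hf.mono (Icc_subset_Icc hx.1 (le_trans hp0.1.2 hx2b))
      have hval : xi k ∈ Set.Icc (f p0) (f x) := by
        rw [hp0fix, hfx1]
        exact ⟨htstar.le, htx1.le⟩
      obtain ⟨w, hwmem, hwfix⟩ := intermediate_value_Icc' hxp0.le hψ3 hval
      have hwx : x < w := lt_of_le_of_ne hwmem.1 (fun he => by
        rw [← he, hfx1] at hwfix
        exact (ne_of_gt htx1) hwfix)
      have hwp0 : w < p0 := lt_of_le_of_ne hwmem.2 (fun he => by
        rw [he, hp0fix] at hwfix
        exact (ne_of_lt htstar) hwfix)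
      have hφ : ContinuousOn (fun t => f (f t) - t) (Set.Icc x w) := by
        have h1 : ContinuousOn (fun t => f (f t)) (Set.Icc a b) := hf.comp hf hmaps
        exact (h1.mono (Icc_subset_Icc hx.1
          (le_trans hwmem.2 (le_trans hp0.1.2 hx2b)))).sub continuousOn_id
      have hphiw : f (f w) - w < 0 := by
        rw [hwfix]
        have h2 : f (xi k) = xi (k+1) := (hxisucc k).symm
        rw [h2]
        linarith
      have hphix : 0 < f (f x) - x := by
        have h3 : f (f x) = xi 2 := by rw [hxisucc 1, hxisucc 0, hxi0]
        rw [h3]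
        linarith
      have h0'' : (0:ℝ) ∈ Set.Icc (f (f w) - w) (f (f x) - x) := ⟨hphiw.le, hphix.le⟩
      obtain ⟨z, hzmem, hzfix⟩ := intermediate_value_Icc' hwx.le hφ h0''
      have hz2 : f (f z) = z := sub_eq_zero.mp hzfix
      have hzne : f z ≠ z := ne_of_gt (hpsi0 z hzmem.1 (lt_of_le_of_lt hzmem.2 hwp0))
      exact hno2 ⟨z, ⟨le_trans hx.1 hzmem.1,
        le_trans hzmem.2 (le_trans hwmem.2 (le_trans hp0.1.2 hx2b))⟩, hz2, hzne⟩


private lemma keyB' (a b : ℝ) (hab : a ≤ b) (f : ℝ → ℝ)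
    (hf : ContinuousOn f (Set.Icc a b))
    (hmaps : Set.MapsTo f (Set.Icc a b) (Set.Icc a b))
    (hno2 : ¬∃ p ∈ Set.Icc a b, f (f p) = p ∧ f p ≠ p) :
    ∀ k, ∀ x ∈ Set.Icc a b, f x < x → f^[k+1] x < x := by
  obtain ⟨hg, hgmaps, hgno2⟩ := reflect_hyps a b f hf hmaps hno2
  intro k x hx hdn
  have hxneg : -x ∈ Set.Icc (-b) (-a) := by
    simp only [Set.mem_Icc]
    constructor <;> linarith [hx.1, hx.2]
  have hup : -x < (fun u => -f (-u)) (-x) := by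
    simp only [neg_neg]
    linarith
  have h1 := keyB (-b) (-a) (by linarith) _ hg hgmaps hgno2 k (-x) hxneg hup
  rw [reflect_iter f (k+1) x] at h1
  linarith


private lemma infinite_exists_gt {s : Set ℕ} (h : s.Infinite) (n : ℕ) : ∃ m ∈ s, n < m := by
  by_contra h2
  push_neg at h2
  exact h (Set.Finite.subset (Set.finite_Iic n) h2)

/-- If f has no periodic point of least period 2, then for each c ∈ I the
iterates f^n(c) converge to a fixed point of f. -/
theorem stmt_19 (a b : ℝ) (hab : a ≤ b) (f : ℝ → ℝ)
    (hf : ContinuousOn f (Set.Icc a b))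
    (hmaps : Set.MapsTo f (Set.Icc a b) (Set.Icc a b))
    (hno2 : ¬∃ x ∈ Set.Icc a b, f (f x) = x ∧ f x ≠ x) :
    ∀ c ∈ Set.Icc a b, ∃ z ∈ Set.Icc a b, f z = z ∧
      Filter.Tendsto (fun n => f^[n] c) Filter.atTop (nhds z) := by
  intro c hc
  set x : ℕ → ℝ := fun n => f^[n] c with hxdef
  have hmem : ∀ n, x n ∈ Set.Icc a b := fun n => (hmaps.iterate n) hc
  have hsucc : ∀ n, x (n+1) = f (x n) := fun n => Function.iterate_succ_apply' f n c
  have fixlim : ∀ z, Filter.Tendsto x Filter.atTop (nhds z) →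
      ∃ z' ∈ Set.Icc a b, f z' = z' ∧ Filter.Tendsto x Filter.atTop (nhds z') := by
    intro z hz
    have hzIcc : z ∈ Set.Icc a b :=
      isClosed_Icc.mem_of_tendsto hz (Filter.Eventually.of_forall hmem)
    refine ⟨z, hzIcc, ?_, hz⟩
    have h2 : Filter.Tendsto (fun n => x (n+1)) Filter.atTop (nhds z) :=
      hz.comp (tendsto_add_atTop_nat 1)
    have h4 : Filter.Tendsto x Filter.atTop (𝓝[Set.Icc a b] z) :=
      tendsto_nhdsWithin_iff.mpr ⟨hz, Filter.Eventually.of_forall hmem⟩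
    have h3 : Filter.Tendsto (fun n => f (x n)) Filter.atTop (nhds (f z)) :=
      (hf z hzIcc).tendsto.comp h4
    have h5 : (fun n => x (n+1)) = (fun n => f (x n)) := funext hsucc
    rw [h5] at h2
    exact tendsto_nhds_unique h3 h2
  by_cases hfix : ∃ N, f (x N) = x N
  · obtain ⟨N, hN⟩ := hfix
    have hconst : ∀ n, n ≥ N → x n = x N := by
      intro n hn
      have h1 : n = (n - N) + N := by omega
      rw [h1]
      show f^[(n-N) + N] c = x N
      rw [Function.iterate_add_apply]
      exact Function.iterate_fixed hN (n - N)
    exact fixlim (x N) (tendsto_atTop_of_eventually_const hconst)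
  · push_neg at hfix
    set U : Set ℕ := {n | x n < x (n+1)} with hU
    set D : Set ℕ := {n | x (n+1) < x n} with hD
    have hUD : ∀ n, n ∈ U ∨ n ∈ D := by
      intro n
      rcases lt_trichotomy (x n) (x (n+1)) with h | h | h
      · exact Or.inl h
      · exfalso
        apply hfix n
        rw [← hsucc n, ← h]
      · exact Or.inr h
    have hnotUD : ∀ n, n ∈ U → n ∈ D → False := by
      intro n h1 h2
      have h3 : x n < x (n+1) := h1
      have h4 : x (n+1) < x n := h2
      linarith
    have hupall : ∀ n ∈ U, ∀ m, n < m → x n < x m := by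
      intro n hn m hm
      have h1 : x n < f (x n) := by rw [← hsucc n]; exact hn
      have h2 := keyB a b hab f hf hmaps hno2 (m - n - 1) (x n) (hmem n) h1
      have h3 : f^[m - n - 1 + 1] (x n) = x m := by
        show f^[m-n-1+1] (f^[n] c) = f^[m] c
        rw [← Function.iterate_add_apply]
        congr 1
        omega
      rwa [h3] at h2
    have hdownall : ∀ n ∈ D, ∀ m, n < m → x m < x n := by
      intro n hn m hm
      have h1 : f (x n) < x n := by rw [← hsucc n]; exact hn
      have h2 := keyB' a b hab f hf hmaps hno2 (m - n - 1) (x n) (hmem n) h1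
      have h3 : f^[m - n - 1 + 1] (x n) = x m := by
        show f^[m-n-1+1] (f^[n] c) = f^[m] c
        rw [← Function.iterate_add_apply]
        congr 1
        omega
      rwa [h3] at h2
    by_cases hDfin : D.Finite
    · -- eventually increasing
      obtain ⟨N, hN⟩ : ∃ N, ∀ n, N ≤ n → n ∈ U := by
        rcases D.eq_empty_or_nonempty with he | hne
        · exact ⟨0, fun n _ => (hUD n).resolve_right (by rw [he]; simp)⟩
        · obtain ⟨N0, hN0⟩ := hDfin.bddAbove
          refine ⟨N0 + 1, fun n hn => (hUD n).resolve_right (fun hd => ?_)⟩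
          have := hN0 hd
          omega
      have hmono : Monotone (fun m => x (N + m)) := by
        apply monotone_nat_of_le_succ
        intro m
        have h1 : x (N+m) < x (N+m+1) := hN (N + m) (by omega)
        exact h1.le
      have hbdd : BddAbove (Set.range fun m => x (N + m)) := by
        refine ⟨b, ?_⟩
        rintro y ⟨m, rfl⟩
        exact (hmem (N+m)).2
      have htend := tendsto_atTop_ciSup hmono hbdd
      have htendx : Filter.Tendsto x Filter.atTop (nhds (⨆ m, x (N + m))) := by
        rw [← tendsto_add_atTop_iff_nat N]
        have heq : (fun n => x (n + N)) = (fun m => x (N + m)) :=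
          funext (fun n => by rw [Nat.add_comm])
        rw [heq]
        exact htend
      exact fixlim _ htendx
    · by_cases hUfin : U.Finite
      · obtain ⟨N, hN⟩ : ∃ N, ∀ n, N ≤ n → n ∈ D := by
          rcases U.eq_empty_or_nonempty with he | hne
          · exact ⟨0, fun n _ => (hUD n).resolve_left (by rw [he]; simp)⟩
          · obtain ⟨N0, hN0⟩ := hUfin.bddAbove
            refine ⟨N0 + 1, fun n hn => (hUD n).resolve_left (fun hd => ?_)⟩
            have := hN0 hd
            omega
        have hanti : Antitone (fun m => x (N + m)) := by
          apply antitone_nat_of_succ_le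
          intro m
          have h1 : x (N+m+1) < x (N+m) := hN (N + m) (by omega)
          exact h1.le
        have hbdd : BddBelow (Set.range fun m => x (N + m)) := by
          refine ⟨a, ?_⟩
          rintro y ⟨m, rfl⟩
          exact (hmem (N+m)).1
        have htend := tendsto_atTop_ciInf hanti hbdd
        have htendx : Filter.Tendsto x Filter.atTop (nhds (⨅ m, x (N + m))) := by
          rw [← tendsto_add_atTop_iff_nat N]
          have heq : (fun n => x (n + N)) = (fun m => x (N + m)) :=
            funext (fun n => by rw [Nat.add_comm])
          rw [heq]
          exact htend
        exact fixlim _ htendx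
      · -- both infinite
        have hDinf : D.Infinite := hDfin
        have hUinf : U.Infinite := hUfin
        set sU := x '' U with hsU
        set sD := x '' D with hsD
        have hsUne : sU.Nonempty := hUinf.nonempty.image x
        have hsDne : sD.Nonempty := hDinf.nonempty.image x
        have hsUbdd : BddAbove sU := by
          refine ⟨b, ?_⟩
          rintro y ⟨n, hn, rfl⟩
          exact (hmem n).2
        have hsDbdd : BddBelow sD := by
          refine ⟨a, ?_⟩
          rintro y ⟨n, hn, rfl⟩
          exact (hmem n).1
        set s := sSup sU with hsdef
        set i := sInf sD with hidef
        have hus : ∀ n ∈ U, x n < s := by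
          intro n hn
          obtain ⟨m, hmU, hml⟩ := infinite_exists_gt hUinf n
          exact lt_of_lt_of_le (hupall n hn m hml) (le_csSup hsUbdd ⟨m, hmU, rfl⟩)
        have hid : ∀ n ∈ D, i < x n := by
          intro n hn
          obtain ⟨m, hmD, hml⟩ := infinite_exists_gt hDinf n
          exact lt_of_le_of_lt (csInf_le hsDbdd ⟨m, hmD, rfl⟩) (hdownall n hn m hml)
        have husd : s ≤ i := by
          have h1 : ∀ y ∈ sU, ∀ w ∈ sD, y < w := by
            rintro y ⟨n, hn, rfl⟩ w ⟨m, hm, rfl⟩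
            rcases lt_trichotomy n m with h | h | h
            · exact hupall n hn m h
            · exact (hnotUD n hn (h ▸ hm)).elim
            · exact hdownall m hm n h
          refine le_csInf hsDne (fun w hw => csSup_le hsUne (fun y hy => (h1 y hy w hw).le))
        have hclass : ∀ n, x n < s ∨ i < x n := fun n => (hUD n).imp (hus n) (hid n)
        have hsIcc : s ∈ Set.Icc a b := by
          obtain ⟨y, n, hn, rfl⟩ := hsUne
          constructor
          · exact le_trans (hmem n).1 (le_csSup hsUbdd ⟨n, hn, rfl⟩)
          · exact csSup_le ⟨x n, n, hn, rfl⟩ (by rintro y ⟨m, hm, rfl⟩; exact (hmem m).2)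
        have hiIcc : i ∈ Set.Icc a b := by
          obtain ⟨y, n, hn, rfl⟩ := hsDne
          constructor
          · exact le_csInf ⟨x n, n, hn, rfl⟩ (by rintro y ⟨m, hm, rfl⟩; exact (hmem m).1)
          · exact le_trans (csInf_le hsDbdd ⟨n, hn, rfl⟩) (hmem n).2
        have hlateU : ∀ γ : ℝ, 0 < γ → ∀ N : ℕ, ∃ n ∈ U, N ≤ n ∧ s - γ < x n := by
          intro γ hγ N
          obtain ⟨y, hy, hylt⟩ := exists_lt_of_lt_csSup hsUne (by linarith : s - γ < s)
          obtain ⟨n0, hn0U, rfl⟩ := hy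
          obtain ⟨n, hnU, hnl⟩ := infinite_exists_gt hUinf (max n0 N)
          refine ⟨n, hnU, ?_, ?_⟩
          · have := le_max_right n0 N; omega
          · have h2 : n0 < n := by have := le_max_left n0 N; omega
            exact lt_trans hylt (hupall n0 hn0U n h2)
        have hlateD : ∀ γ : ℝ, 0 < γ → ∀ N : ℕ, ∃ m ∈ D, N ≤ m ∧ x m < i + γ := by
          intro γ hγ N
          obtain ⟨y, hy, hylt⟩ := exists_lt_of_csInf_lt hsDne (by linarith : i < i + γ)
          obtain ⟨m0, hm0D, rfl⟩ := hy
          obtain ⟨m, hmD, hml⟩ := infinite_exists_gt hDinf (max m0 N)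
          refine ⟨m, hmD, ?_, ?_⟩
          · have := le_max_right m0 N; omega
          · have h2 : m0 < m := by have := le_max_left m0 N; omega
            exact lt_trans (hdownall m0 hm0D m h2) hylt
        have hDtail : ∀ γ : ℝ, 0 < γ → ∃ M, ∀ m ∈ D, M ≤ m → x m < i + γ := by
          intro γ hγ
          obtain ⟨y, hy, hylt⟩ := exists_lt_of_csInf_lt hsDne (by linarith : i < i + γ)
          obtain ⟨m0, hm0D, rfl⟩ := hy
          exact ⟨m0 + 1, fun m hm hle => lt_trans (hdownall m0 hm0D m (by omega)) hylt⟩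
        have hUtail : ∀ γ : ℝ, 0 < γ → ∃ M, ∀ n ∈ U, M ≤ n → s - γ < x n := by
          intro γ hγ
          obtain ⟨y, hy, hylt⟩ := exists_lt_of_lt_csSup hsUne (by linarith : s - γ < s)
          obtain ⟨n0, hn0U, rfl⟩ := hy
          exact ⟨n0 + 1, fun n hn hle => lt_trans hylt (hupall n0 hn0U n (by omega))⟩
        have hconts : ∀ p ∈ Set.Icc a b, ∀ ε : ℝ, 0 < ε → ∃ δ > 0, ∀ y ∈ Set.Icc a b,
            |y - p| < δ → |f y - f p| < ε := by
          intro p hp ε hε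
          have h1 := hf p hp
          rw [Metric.continuousWithinAt_iff] at h1
          obtain ⟨δ, hδ, h⟩ := h1 ε hε
          refine ⟨δ, hδ, fun y hy hd => ?_⟩
          have h2 := h hy (by rwa [Real.dist_eq])
          rwa [Real.dist_eq] at h2
        rcases eq_or_lt_of_le husd with hsi | hsi
        · -- s = i : converges
          apply fixlim s
          rw [Metric.tendsto_atTop]
          intro ε hε
          obtain ⟨n1, hn1U, _, hn1⟩ := hlateU ε hε 0
          obtain ⟨m1, hm1D, _, hm1⟩ := hlateD ε hε 0
          refine ⟨max n1 m1 + 1, fun n hn => ?_⟩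
          have hn1n : n1 < n := by have := le_max_left n1 m1; omega
          have hm1n : m1 < n := by have := le_max_right n1 m1; omega
          rw [Real.dist_eq, abs_lt]
          rcases hUD n with h | h
          · constructor
            · have := hupall n1 hn1U n hn1n; linarith
            · have := hus n h; linarith
          · constructor
            · have := hid n h; rw [← hsi] at this; linarith
            · have := hdownall m1 hm1D n hm1n; rw [← hsi] at hm1; linarith
        · -- s < i : contradiction
          exfalso
          have hfs_ge : s ≤ f s := by
            by_contra h
            push_neg at h
            set ε := (s - f s)/2 with hεdef
            have hε : 0 < ε := by rw [hεdef]; linarith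
            obtain ⟨δ, hδ, hcont⟩ := hconts s hsIcc ε hε
            obtain ⟨n, hnU, _, hn⟩ := hlateU (min δ ε) (lt_min hδ hε) 0
            have hminδ := min_le_left δ ε
            have hminε := min_le_right δ ε
            have hxns : |x n - s| < δ := by
              have h1 : x n < s := hus n hnU
              rw [abs_lt]
              constructor <;> linarith
            have h3 := hcont (x n) (hmem n) hxns
            have h4 : x n < f (x n) := by rw [← hsucc n]; exact hnU
            have h5 := abs_lt.mp h3
            linarith
          have hfs_nm : ¬ (s < f s ∧ f s < i) := by
            rintro ⟨h1, h2⟩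
            set ε := min (f s - s) (i - f s) with hεdef
            have hε : 0 < ε := lt_min (by linarith) (by linarith)
            obtain ⟨δ, hδ, hcont⟩ := hconts s hsIcc ε hε
            obtain ⟨n, hnU, _, hn⟩ := hlateU (min δ ε) (lt_min hδ hε) 0
            have hminδ := min_le_left δ ε
            have hxns : |x n - s| < δ := by
              have h1' : x n < s := hus n hnU
              rw [abs_lt]; constructor <;> linarith
            have h3 := abs_lt.mp (hcont (x n) (hmem n) hxns)
            have hε1 := min_le_left (f s - s) (i - f s)
            have hε2 := min_le_right (f s - s) (i - f s)
            have h5 : s < x (n+1) := by rw [hsucc n]; linarith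
            have h6 : x (n+1) < i := by rw [hsucc n]; linarith
            rcases hclass (n+1) with h | h
            · linarith
            · linarith
          have hfs_le : f s ≤ i := by
            by_contra h
            push_neg at h
            set ε := (f s - i)/2 with hεdef
            have hε : 0 < ε := by rw [hεdef]; linarith
            obtain ⟨M, hM⟩ := hDtail ε hε
            obtain ⟨δ, hδ, hcont⟩ := hconts s hsIcc ε hε
            obtain ⟨n, hnU, hnM, hn⟩ := hlateU (min δ ε) (lt_min hδ hε) M
            have hminδ := min_le_left δ ε
            have hxns : |x n - s| < δ := by
              have h1' : x n < s := hus n hnU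
              rw [abs_lt]; constructor <;> linarith
            have h3 := abs_lt.mp (hcont (x n) (hmem n) hxns)
            have h5 : i + ε < x (n+1) := by rw [hsucc n]; linarith
            rcases hUD (n+1) with h6 | h6
            · have := hus (n+1) h6; linarith
            · have := hM (n+1) h6 (by omega); linarith
          have hfseq : f s = s ∨ f s = i := by
            rcases eq_or_lt_of_le hfs_ge with h | h
            · exact Or.inl h.symm
            · right
              by_contra h2
              exact hfs_nm ⟨h, lt_of_le_of_ne hfs_le h2⟩
          have hfi_le : f i ≤ i := by
            by_contra h
            push_neg at h
            set ε := (f i - i)/2 with hεdef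
            have hε : 0 < ε := by rw [hεdef]; linarith
            obtain ⟨δ, hδ, hcont⟩ := hconts i hiIcc ε hε
            obtain ⟨m, hmD, _, hm⟩ := hlateD (min δ ε) (lt_min hδ hε) 0
            have hminδ := min_le_left δ ε
            have hminε := min_le_right δ ε
            have hxmi : |x m - i| < δ := by
              have h1' : i < x m := hid m hmD
              rw [abs_lt]; constructor <;> linarith
            have h3 := abs_lt.mp (hcont (x m) (hmem m) hxmi)
            have h4 : f (x m) < x m := by rw [← hsucc m]; exact hmD
            linarith
          have hfi_nm : ¬ (s < f i ∧ f i < i) := by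
            rintro ⟨h1, h2⟩
            set ε := min (f i - s) (i - f i) with hεdef
            have hε : 0 < ε := lt_min (by linarith) (by linarith)
            obtain ⟨δ, hδ, hcont⟩ := hconts i hiIcc ε hε
            obtain ⟨m, hmD, _, hm⟩ := hlateD (min δ ε) (lt_min hδ hε) 0
            have hminδ := min_le_left δ ε
            have hxmi : |x m - i| < δ := by
              have h1' : i < x m := hid m hmD
              rw [abs_lt]; constructor <;> linarith
            have h3 := abs_lt.mp (hcont (x m) (hmem m) hxmi)
            have hε1 := min_le_left (f i - s) (i - f i)
            have hε2 := min_le_right (f i - s) (i - f i)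
            have h5 : s < x (m+1) := by rw [hsucc m]; linarith
            have h6 : x (m+1) < i := by rw [hsucc m]; linarith
            rcases hclass (m+1) with h | h
            · linarith
            · linarith
          have hfi_ge : s ≤ f i := by
            by_contra h
            push_neg at h
            set ε := (s - f i)/2 with hεdef
            have hε : 0 < ε := by rw [hεdef]; linarith
            obtain ⟨M, hM⟩ := hUtail ε hε
            obtain ⟨δ, hδ, hcont⟩ := hconts i hiIcc ε hε
            obtain ⟨m, hmD, hmM, hm⟩ := hlateD (min δ ε) (lt_min hδ hε) M
            have hminδ := min_le_left δ ε
            have hxmi : |x m - i| < δ := by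
              have h1' : i < x m := hid m hmD
              rw [abs_lt]; constructor <;> linarith
            have h3 := abs_lt.mp (hcont (x m) (hmem m) hxmi)
            have h5 : x (m+1) < s - ε := by rw [hsucc m]; linarith
            rcases hUD (m+1) with h6 | h6
            · have := hM (m+1) h6 (by omega); linarith
            · have := hid (m+1) h6; linarith
          have hfieq : f i = i ∨ f i = s := by
            rcases eq_or_lt_of_le hfi_le with h | h
            · exact Or.inl h
            · right
              rcases eq_or_lt_of_le hfi_ge with h2 | h2
              · exact h2.symm
              · exact absurd ⟨h2, h⟩ hfi_nm
          rcases hfseq with hfs | hfs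
          · -- f s = s : D must be finite, contradiction
            set ε := (i - s)/2 with hεdef
            have hε : 0 < ε := by rw [hεdef]; linarith
            obtain ⟨δ, hδ, hcont⟩ := hconts s hsIcc ε hε
            set γ := min δ ε with hγdef
            have hγ : 0 < γ := lt_min hδ hε
            have hminδ : γ ≤ δ := min_le_left δ ε
            have hminε : γ ≤ ε := min_le_right δ ε
            obtain ⟨n, hnU, _, hn⟩ := hlateU γ hγ 0
            have hstay : ∀ j : ℕ, (n + j) ∈ U ∧ s - γ < x (n + j) := by
              intro j
              induction j with
              | zero => exact ⟨hnU, hn⟩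
              | succ j ih =>
                obtain ⟨hU', hgt⟩ := ih
                have hlt : x (n+j) < s := hus _ hU'
                have hxns : |x (n+j) - s| < δ := by
                  rw [abs_lt]; constructor <;> linarith
                have h3 := abs_lt.mp (hcont (x (n+j)) (hmem _) hxns)
                rw [hfs] at h3
                have h5 : x (n+j+1) < i := by rw [hsucc]; linarith
                have h6 : (n+j+1) ∈ U := by
                  rcases hUD (n+j+1) with h | h
                  · exact h
                  · exact absurd h5 (not_lt.mpr (hid _ h).le)
                have h7 : x (n+j) < x (n+j+1) := hU'
                refine ⟨h6, ?_⟩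
                have h9 : n + (j+1) = n + j + 1 := rfl
                rw [h9]
                linarith
            apply hDinf
            apply Set.Finite.subset (Set.finite_Iic n)
            intro m hm
            simp only [Set.mem_Iic]
            by_contra hmn
            push_neg at hmn
            have h8 := (hstay (m - n)).1
            have h9 : n + (m - n) = m := by omega
            rw [h9] at h8
            exact hnotUD m h8 hm
          · rcases hfieq with hfi | hfi
            · -- f i = i : U must be finite
              set ε := (i - s)/2 with hεdef
              have hε : 0 < ε := by rw [hεdef]; linarith
              obtain ⟨δ, hδ, hcont⟩ := hconts i hiIcc ε hε
              set γ := min δ ε with hγdef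
              have hγ : 0 < γ := lt_min hδ hε
              have hminδ : γ ≤ δ := min_le_left δ ε
              have hminε : γ ≤ ε := min_le_right δ ε
              obtain ⟨m, hmD, _, hm⟩ := hlateD γ hγ 0
              have hstay : ∀ j : ℕ, (m + j) ∈ D ∧ x (m + j) < i + γ := by
                intro j
                induction j with
                | zero => exact ⟨hmD, hm⟩
                | succ j ih =>
                  obtain ⟨hD', hlt⟩ := ih
                  have hgt : i < x (m+j) := hid _ hD'
                  have hxmi : |x (m+j) - i| < δ := by
                    rw [abs_lt]; constructor <;> linarith
                  have h3 := abs_lt.mp (hcont (x (m+j)) (hmem _) hxmi)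
                  rw [hfi] at h3
                  have h5 : s < x (m+j+1) := by rw [hsucc]; linarith
                  have h6 : (m+j+1) ∈ D := by
                    rcases hUD (m+j+1) with h | h
                    · exact absurd h5 (not_lt.mpr (hus _ h).le)
                    · exact h
                  have h7 : x (m+j+1) < x (m+j) := hD'
                  refine ⟨h6, ?_⟩
                  have h9 : m + (j+1) = m + j + 1 := rfl
                  rw [h9]
                  linarith
              apply hUinf
              apply Set.Finite.subset (Set.finite_Iic m)
              intro n hn
              simp only [Set.mem_Iic]
              by_contra hnm
              push_neg at hnm
              have h8 := (hstay (n - m)).1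
              have h9 : m + (n - m) = n := by omega
              rw [h9] at h8
              exact hnotUD n hn h8
            · -- f s = i, f i = s : period 2 at s
              apply hno2
              refine ⟨s, hsIcc, ?_, ?_⟩
              · rw [hfs, hfi]
              · rw [hfs]
                exact ne_of_gt hsi
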